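/- arXiv:1111.4157 — 7 statements merged into one kernel-verified Lean document; each statement's English description precedes it below -/
import Mathlib

section
/- For every natural number n ≥ 1, the characteristic polynomial of the n×n real matrix A_n (zero diagonal, subdiagonal entries equal to 1, superdiagonal entries (A_n)_{i,i+1} = i+1) equals the n-th probabilist's Hermite polynomial H_n; equivalently, det(A_n − λI) = H_n(−λ) for all real λ. -/
open Polynomial Matrix

/-- The `n × n` tridiagonal matrix `A_n` with zero diagonal, subdiagonal entries `1`,
and superdiagonal entries `(A_n)_{i,i+1} = i + 1`. -/
noncomputable def hermMatrix (n : ℕ) : Matrix (Fin n) (Fin n) ℝ :=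
  Matrix.of fun i j =>
    if (j : ℕ) = (i : ℕ) + 1 then ((i : ℕ) + 1 : ℝ)
    else if (i : ℕ) = (j : ℕ) + 1 then 1
    else 0

/-- Entry function of the characteristic matrix, depending only on ℕ indices. -/
noncomputable def gEnt (a b : ℕ) : ℝ[X] :=
  if a = b then X
  else if b = a + 1 then -C ((a : ℝ) + 1)
  else if a = b + 1 then -1
  else 0

lemma charmatrix_hermMatrix (m : ℕ) (i j : Fin m) :
    charmatrix (hermMatrix m) i j = gEnt (i : ℕ) (j : ℕ) := by
  rcases eq_or_ne i j with h | h
  · subst h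
    simp [charmatrix_apply_eq, gEnt, hermMatrix]
  · have h' : (i : ℕ) ≠ (j : ℕ) := fun hh => h (Fin.ext hh)
    rw [charmatrix_apply_ne _ _ _ h, gEnt, if_neg h']
    simp only [hermMatrix, Matrix.of_apply]
    split_ifs with h1 h2 <;> simp

lemma det_corner {R : Type*} [CommRing R] {n : ℕ} (M : Matrix (Fin (n + 1)) (Fin (n + 1)) R)
    (h : ∀ i : Fin n, M i.castSucc (Fin.last n) = 0) :
    M.det = M (Fin.last n) (Fin.last n) * (M.submatrix Fin.castSucc Fin.castSucc).det := by
  rw [Matrix.det_succ_column M (Fin.last n), Fin.sum_univ_castSucc]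
  have hsign : ((-1 : R)) ^ ((Fin.last n : ℕ) + (Fin.last n : ℕ)) = 1 :=
    Even.neg_one_pow ⟨n, rfl⟩
  simp [h, hsign, Fin.succAbove_last]

lemma det_lastRow {R : Type*} [CommRing R] {n : ℕ} (M : Matrix (Fin (n + 2)) (Fin (n + 2)) R)
    (h : ∀ j : Fin (n + 2), (j : ℕ) < n → M (Fin.last (n + 1)) j = 0) :
    M.det =
      M (Fin.last (n + 1)) (Fin.last (n + 1)) * (M.submatrix Fin.castSucc Fin.castSucc).det
      - M (Fin.last (n + 1)) ((Fin.last n).castSucc) *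
        (M.submatrix Fin.castSucc ((Fin.last n).castSucc.succAbove)).det := by
  rw [Matrix.det_succ_row M (Fin.last (n + 1)), Fin.sum_univ_castSucc, Fin.sum_univ_castSucc]
  have h0 : ∀ x : Fin n, M (Fin.last (n + 1)) (x.castSucc.castSucc) = 0 := by
    intro x; exact h _ (by simp [x.isLt])
  have hs1 : ((-1 : R)) ^ ((Fin.last (n + 1) : ℕ) + ((Fin.last n).castSucc : ℕ)) = -1 := by
    simp only [Fin.val_last, Fin.coe_castSucc]
    have : n + 1 + n = 2 * n + 1 := by ring
    rw [this, pow_succ, pow_mul]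
    simp
  have hs2 : ((-1 : R)) ^ ((Fin.last (n + 1) : ℕ) + (Fin.last (n + 1) : ℕ)) = 1 :=
    Even.neg_one_pow ⟨n + 1, rfl⟩
  have hsucc : (Fin.last (n + 1)).succAbove = Fin.castSucc := Fin.succAbove_last
  rw [Finset.sum_eq_zero (fun x _ => by rw [h0 x]; ring)]
  rw [hs1, hs2, hsucc]
  ring

lemma succAbove_val (n : ℕ) (k : Fin (n + 1)) :
    (((Fin.last n).castSucc.succAbove k : Fin (n + 2)) : ℕ) =
      if (k : ℕ) < n then (k : ℕ) else (k : ℕ) + 1 := by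
  rw [Fin.succAbove]
  split_ifs with h1 h2 h3
  · simp
  · exact absurd (by simpa [Fin.lt_def] using h1) h2
  · exact absurd (by simpa [Fin.lt_def] using h3) h1
  · simp

lemma charpoly_rec (n : ℕ) :
    (hermMatrix (n + 2)).charpoly =
      X * (hermMatrix (n + 1)).charpoly - ((n : ℝ[X]) + 1) * (hermMatrix n).charpoly := by
  show (charmatrix (hermMatrix (n + 2))).det = _
  rw [det_lastRow _ (fun j hj => by
    rw [charmatrix_hermMatrix]
    simp only [Fin.val_last, gEnt]
    have h1 : ¬ (n + 1 = (j : ℕ)) := by omega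
    have h2 : ¬ ((j : ℕ) = n + 1 + 1) := by omega
    have h3 : ¬ (n + 1 = (j : ℕ) + 1) := by omega
    rw [if_neg h1, if_neg h2, if_neg h3])]
  have hcorner : charmatrix (hermMatrix (n + 2)) (Fin.last (n + 1)) (Fin.last (n + 1)) = X := by
    rw [charmatrix_hermMatrix]; simp [gEnt]
  have hsub : charmatrix (hermMatrix (n + 2)) (Fin.last (n + 1)) ((Fin.last n).castSucc) = -1 := by
    rw [charmatrix_hermMatrix]
    simp only [Fin.val_last, Fin.coe_castSucc, gEnt]
    have h1 : ¬ (n + 1 = n) := by omega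
    have h2 : ¬ (n = n + 1 + 1) := by omega
    rw [if_neg h1, if_neg h2]
    simp
  have hminor1 : (charmatrix (hermMatrix (n + 2))).submatrix Fin.castSucc Fin.castSucc =
      charmatrix (hermMatrix (n + 1)) := by
    ext i j
    rw [Matrix.submatrix_apply, charmatrix_hermMatrix, charmatrix_hermMatrix]
    simp
  -- minor for column n
  set B := (charmatrix (hermMatrix (n + 2))).submatrix Fin.castSucc
      ((Fin.last n).castSucc.succAbove) with hB
  have hBcol : ∀ i : Fin n, B i.castSucc (Fin.last n) = 0 := by
    intro i
    rw [hB, Matrix.submatrix_apply, charmatrix_hermMatrix]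
    have hv : (((Fin.last n).castSucc.succAbove (Fin.last n) : Fin (n + 2)) : ℕ) = n + 1 := by
      rw [succAbove_val]; simp
    rw [hv]
    simp only [Fin.coe_castSucc, gEnt]
    have hin : (i : ℕ) < n := i.isLt
    have h1 : ¬ ((i : ℕ) = n + 1) := by omega
    have h2 : ¬ (n + 1 = (i : ℕ) + 1) := by omega
    have h3 : ¬ ((i : ℕ) = n + 1 + 1) := by omega
    rw [if_neg h1, if_neg h2, if_neg h3]
  have hBcorner : B (Fin.last n) (Fin.last n) = -C ((n : ℝ) + 1) := by
    rw [hB, Matrix.submatrix_apply, charmatrix_hermMatrix]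
    have hv : (((Fin.last n).castSucc.succAbove (Fin.last n) : Fin (n + 2)) : ℕ) = n + 1 := by
      rw [succAbove_val]; simp
    rw [hv]
    simp only [Fin.coe_castSucc, Fin.val_last, gEnt]
    have h1 : ¬ (n = n + 1) := by omega
    rw [if_neg h1]
    simp
  have hBminor : B.submatrix Fin.castSucc Fin.castSucc = charmatrix (hermMatrix n) := by
    ext i j
    rw [Matrix.submatrix_apply, hB, Matrix.submatrix_apply, charmatrix_hermMatrix,
      charmatrix_hermMatrix]
    have hv : (((Fin.last n).castSucc.succAbove j.castSucc : Fin (n + 2)) : ℕ) = (j : ℕ) := by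
      rw [succAbove_val]; simp [j.isLt]
    rw [hv]
    simp
  rw [det_corner B hBcol, hcorner, hsub, hminor1, hBcorner, hBminor]
  show _ = X * (charmatrix (hermMatrix (n + 1))).det - _ * (charmatrix (hermMatrix n)).det
  have : ((n : ℝ[X]) + 1) = C ((n : ℝ) + 1) := by push_cast; simp
  rw [this]
  ring

lemma hermite_deriv (n : ℕ) :
    derivative (hermite (n + 1)) = ((n : ℤ[X]) + 1) * hermite n := by
  induction n with
  | zero => simp [hermite_succ, hermite_zero, hermite_one]
  | succ k ih =>
    rw [hermite_succ (k + 1), ih, derivative_sub, derivative_mul, derivative_X,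
      derivative_mul, ih]
    have hd : derivative ((k : ℤ[X]) + 1) = 0 := by
      simp
    rw [hd, hermite_succ k]
    push_cast
    ring

lemma hermite_rec (n : ℕ) :
    hermite (n + 2) = X * hermite (n + 1) - ((n : ℤ[X]) + 1) * hermite n := by
  rw [hermite_succ (n + 1), hermite_deriv n]

lemma charpoly_herm (n : ℕ) :
    (hermMatrix n).charpoly = (hermite n).map (Int.castRingHom ℝ) := by
  have base0 : (hermMatrix 0).charpoly = (hermite 0).map (Int.castRingHom ℝ) := by
    show (charmatrix (hermMatrix 0)).det = _
    rw [Matrix.det_fin_zero, hermite_zero]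
    simp
  have base1 : (hermMatrix 1).charpoly = (hermite 1).map (Int.castRingHom ℝ) := by
    show (charmatrix (hermMatrix 1)).det = _
    rw [Matrix.det_fin_one, hermite_one, Polynomial.map_X, charmatrix_hermMatrix]
    simp [gEnt]
  have key : ∀ m : ℕ, (hermMatrix m).charpoly = (hermite m).map (Int.castRingHom ℝ) ∧
      (hermMatrix (m + 1)).charpoly = (hermite (m + 1)).map (Int.castRingHom ℝ) := by
    intro m
    induction m with
    | zero => exact ⟨base0, base1⟩
    | succ k ih =>
      refine ⟨ih.2, ?_⟩
      rw [charpoly_rec k, hermite_rec k, Polynomial.map_sub, Polynomial.map_mul,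
        Polynomial.map_mul, Polynomial.map_X, Polynomial.map_add, Polynomial.map_one,
        Polynomial.map_natCast, ih.1, ih.2]
  exact (key n).1

lemma hermite_parity (n : ℕ) (x : ℝ) :
    (Polynomial.aeval (-x) (hermite n) : ℝ) = (-1) ^ n * Polynomial.aeval x (hermite n) := by
  have key : ∀ m : ℕ,
      ((Polynomial.aeval (-x) (hermite m) : ℝ) = (-1) ^ m * Polynomial.aeval x (hermite m)) ∧
      ((Polynomial.aeval (-x) (hermite (m + 1)) : ℝ) =
        (-1) ^ (m + 1) * Polynomial.aeval x (hermite (m + 1))) := by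
    intro m
    induction m with
    | zero =>
      constructor
      · simp [hermite_zero]
      · simp [hermite_one]
    | succ k ih =>
      refine ⟨ih.2, ?_⟩
      rw [hermite_rec k]
      simp only [_root_.map_sub, _root_.map_mul, aeval_X, _root_.map_add, _root_.map_one,
        map_natCast, ih.1, ih.2]
      ring
  exact (key n).1

/-- The characteristic polynomial of `A_n` equals the `n`-th probabilist's Hermite
polynomial; equivalently `det (A_n - λ I) = H_n (-λ)` for all real `λ`. -/
theorem stmt_0 (n : ℕ) (hn : 1 ≤ n) :
    (hermMatrix n).charpoly = (Polynomial.hermite n).map (Int.castRingHom ℝ) ∧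
    ∀ l : ℝ,
      (hermMatrix n - l • (1 : Matrix (Fin n) (Fin n) ℝ)).det =
        Polynomial.aeval (-l) (Polynomial.hermite n) := by
  refine ⟨charpoly_herm n, fun l => ?_⟩
  have h1 : hermMatrix n - l • (1 : Matrix (Fin n) (Fin n) ℝ) =
      -(l • (1 : Matrix (Fin n) (Fin n) ℝ) - hermMatrix n) := (neg_sub _ _).symm
  have h2 : ((hermMatrix n).charpoly).eval l =
      (l • (1 : Matrix (Fin n) (Fin n) ℝ) - hermMatrix n).det := by
    have := RingHom.map_det (Polynomial.evalRingHom l) (charmatrix (hermMatrix n))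
    have hmap : (charmatrix (hermMatrix n)).map (Polynomial.evalRingHom l) =
        l • (1 : Matrix (Fin n) (Fin n) ℝ) - hermMatrix n := by
      ext i j
      rcases eq_or_ne i j with h | h
      · subst h
        simp [charmatrix_apply_eq, Matrix.one_apply, Matrix.sub_apply]
      · simp [charmatrix_apply_ne _ _ _ h, Matrix.one_apply_ne h, Matrix.sub_apply]
    calc ((hermMatrix n).charpoly).eval l
        = (Polynomial.evalRingHom l) ((charmatrix (hermMatrix n)).det) := rfl
      _ = ((charmatrix (hermMatrix n)).map (Polynomial.evalRingHom l)).det := this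
      _ = _ := by rw [hmap]
  rw [h1, Matrix.det_neg, ← h2, charpoly_herm n, hermite_parity n l]
  rw [Polynomial.eval_map]
  rw [Polynomial.aeval_def, algebraMap_int_eq]
  simp
end

section
/- For every natural number n ≥ 1, a real number λ is an eigenvalue of the matrix A_n if and only if λ is a root of the n-th probabilist's Hermite polynomial, i.e., H_n(λ) = 0. -/
open Polynomial Matrix

lemma deriv_hermite (n : ℕ) : derivative (hermite (n+1)) = (n+1 : ℕ) • hermite n := by
  induction n with
  | zero => simp [hermite_succ]
  | succ n ih =>
    rw [hermite_succ (n+1), derivative_sub, derivative_mul, derivative_X, one_mul, ih,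
      hermite_succ n]
    simp only [derivative_smul, smul_sub]
    ring_nf

lemma aeval_rec (n : ℕ) (l : ℝ) :
    aeval l (hermite (n+2)) = l * aeval l (hermite (n+1)) - ((n:ℝ)+1) * aeval l (hermite n) := by
  rw [hermite_succ (n+1), deriv_hermite n]
  push_cast [map_sub, _root_.map_mul, aeval_X, map_nsmul]
  ring


noncomputable def charMat (n : ℕ) (l : ℝ) : Matrix (Fin n) (Fin n) ℝ :=
  Matrix.of fun i j =>
    if (i : ℕ) = (j : ℕ) then l
    else if (j : ℕ) = (i : ℕ) + 1 then -((i : ℕ) + 1 : ℝ)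
    else if (i : ℕ) = (j : ℕ) + 1 then -1
    else 0

lemma charMat_apply (n : ℕ) (l : ℝ) (i j : Fin n) :
    charMat n l i j = if (i : ℕ) = (j : ℕ) then l
    else if (j : ℕ) = (i : ℕ) + 1 then -((i : ℕ) + 1 : ℝ)
    else if (i : ℕ) = (j : ℕ) + 1 then -1
    else 0 := rfl

lemma charMat_sub_last (n : ℕ) (l : ℝ) :
    (charMat (n+2) l).submatrix (Fin.last (n+1)).succAbove (Fin.last (n+1)).succAbove
      = charMat (n+1) l := by
  ext i j
  simp [Fin.succAbove_last, charMat_apply]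

lemma det_charMat_rec (n : ℕ) (l : ℝ) :
    (charMat (n+2) l).det =
      l * (charMat (n+1) l).det - ((n:ℝ)+1) * (charMat n l).det := by
  rw [det_succ_row _ (Fin.last (n+1))]
  rw [Fin.sum_univ_castSucc, Fin.sum_univ_castSucc]
  have h0 : ∀ j : Fin n,
      charMat (n+2) l (Fin.last (n+1)) (Fin.castSucc (Fin.castSucc j)) = 0 := by
    intro j
    have := j.isLt
    simp only [charMat_apply, Fin.val_last, Fin.coe_castSucc]
    split_ifs <;> first | (exfalso; omega) | rfl
  rw [Finset.sum_eq_zero (fun j _ => by rw [h0 j]; ring)]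
  -- the two remaining terms
  have hlast : charMat (n+2) l (Fin.last (n+1)) (Fin.last (n+1)) = l := by
    simp [charMat_apply]
  have hsub : charMat (n+2) l (Fin.last (n+1)) (Fin.castSucc (Fin.last n)) = -1 := by
    simp only [charMat_apply, Fin.coe_castSucc, Fin.val_last]
    split_ifs <;> first | (exfalso; omega) | rfl
  rw [hlast, hsub, charMat_sub_last]
  -- now compute the minor N at column (castSucc (last n))
  set c : Fin (n+2) := Fin.castSucc (Fin.last n) with hc
  set N : Matrix (Fin (n+1)) (Fin (n+1)) ℝ :=
    (charMat (n+2) l).submatrix (Fin.last (n+1)).succAbove c.succAbove with hN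
  have hNdet : N.det = -((n:ℝ)+1) * (charMat n l).det := by
    rw [det_succ_column _ (Fin.last n)]
    rw [Fin.sum_univ_castSucc]
    have hcol : ∀ i : Fin (n+1), N i (Fin.last n) =
        charMat (n+2) l (Fin.castSucc i) (Fin.last (n+1)) := by
      intro i
      have : c.succAbove (Fin.last n) = Fin.last (n+1) := by
        simp [hc, Fin.succAbove, Fin.ext_iff]
      simp [hN, Fin.succAbove_last, this]
    have hz : ∀ i : Fin n, N (Fin.castSucc i) (Fin.last n) = 0 := by
      intro i
      rw [hcol]
      have := i.isLt
      simp only [charMat_apply, Fin.coe_castSucc, Fin.val_last]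
      split_ifs <;> first | (exfalso; omega) | rfl
    rw [Finset.sum_eq_zero (fun i _ => by rw [hz i]; ring)]
    have hentry : N (Fin.last n) (Fin.last n) = -((n:ℝ)+1) := by
      rw [hcol]
      simp only [charMat_apply, Fin.coe_castSucc, Fin.val_last]
      split_ifs <;> first | (exfalso; omega) | (push_cast; ring)
    have hminor : N.submatrix (Fin.last n).succAbove (Fin.last n).succAbove = charMat n l := by
      ext i j
      have := j.isLt
      have hcj : c.succAbove (Fin.castSucc j) = Fin.castSucc (Fin.castSucc j) := by
        simp [hc, Fin.succAbove, Fin.ext_iff, Fin.lt_def]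
      simp [hN, Fin.succAbove_last, hcj, charMat_apply]
    have hs : ((-1:ℝ)) ^ ((Fin.last n : ℕ) + (Fin.last n : ℕ)) = 1 := by
      simp only [Fin.val_last]
      have : n + n = 2 * n := by ring
      rw [this, pow_mul]; simp
    rw [hentry, hminor, hs]
    ring
  rw [hNdet]
  have hsign : ((-1:ℝ)) ^ ((Fin.last (n+1) : ℕ) + (c : ℕ)) = -1 := by
    simp only [Fin.val_last, hc, Fin.coe_castSucc, Fin.val_last]
    have : (n + 1) + n = 2 * n + 1 := by ring
    rw [this, pow_succ, pow_mul]
    simp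
  have hsign2 : ((-1:ℝ)) ^ ((Fin.last (n+1) : ℕ) + (Fin.last (n+1) : ℕ)) = 1 := by
    simp only [Fin.val_last]
    have : (n + 1) + (n + 1) = 2 * (n+1) := by ring
    rw [this, pow_mul]
    simp
  rw [hsign, hsign2]
  ring

lemma charMat_eq (n : ℕ) (l : ℝ) : charMat n l = l • 1 - hermMatrix n := by
  ext i j
  simp only [charMat, hermMatrix, Matrix.of_apply, Matrix.sub_apply, Matrix.smul_apply,
    Matrix.one_apply, smul_eq_mul, Fin.ext_iff]
  split_ifs <;> simp_all

lemma det_charMat (n : ℕ) (l : ℝ) : (charMat n l).det = aeval l (hermite n) := by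
  induction n using Nat.strong_induction_on with
  | _ n ih =>
    match n with
    | 0 => simp [charMat]
    | 1 =>
      rw [show (1:ℕ) = 0+1 from rfl, hermite_succ]
      simp [Matrix.det_fin_one, charMat_apply]
    | (n+2) =>
      rw [det_charMat_rec, aeval_rec, ih (n+1) (by omega), ih n (by omega)]

/-- A real number `λ` is an eigenvalue of `A_n` (i.e. `A_n v = λ v` for some nonzero
vector `v`) if and only if `λ` is a root of the `n`-th probabilist's Hermite polynomial. -/
theorem stmt_2 (n : ℕ) (hn : 1 ≤ n) (l : ℝ) :
    (∃ v : Fin n → ℝ, v ≠ 0 ∧ (hermMatrix n).mulVec v = l • v) ↔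
      Polynomial.aeval l (Polynomial.hermite n) = 0 := by
  rw [← det_charMat n l, charMat_eq]
  rw [← Matrix.exists_mulVec_eq_zero_iff]
  constructor
  · rintro ⟨v, hv, hmv⟩
    refine ⟨v, hv, ?_⟩
    rw [Matrix.sub_mulVec, Matrix.smul_mulVec, Matrix.one_mulVec, hmv, sub_self]
  · rintro ⟨v, hv, hmv⟩
    refine ⟨v, hv, ?_⟩
    rw [Matrix.sub_mulVec, Matrix.smul_mulVec, Matrix.one_mulVec, sub_eq_zero] at hmv
    exact hmv.symm
end

section
/- For every natural number n ≥ 1 and all real numbers a, b, every complex eigenvalue of the tridiagonal matrix M_n(a,b) (diagonal entries a, subdiagonal entries b, superdiagonal entries (i+1)·b) is real; equivalently, every complex root of the characteristic polynomial of M_n(a,b) has imaginary part zero. -/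
open Matrix Polynomial

/-- The `n × n` tridiagonal matrix `M_n(a,b)` with diagonal entries `a`, subdiagonal
entries `b`, and superdiagonal entries `(M_n)_{i,i+1} = (i+1)·b`. -/
noncomputable def triMatrix (n : ℕ) (a b : ℝ) : Matrix (Fin n) (Fin n) ℝ :=
  Matrix.of fun i j =>
    if (i : ℕ) = (j : ℕ) then a
    else if (j : ℕ) = (i : ℕ) + 1 then ((i : ℕ) + 1 : ℝ) * b
    else if (i : ℕ) = (j : ℕ) + 1 then b
    else 0

/-- The symmetrized version of `triMatrix`. -/
noncomputable def symTri (n : ℕ) (a b : ℝ) : Matrix (Fin n) (Fin n) ℝ :=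
  Matrix.of fun i j =>
    if (i : ℕ) = (j : ℕ) then a
    else if (j : ℕ) = (i : ℕ) + 1 then b * Real.sqrt ((i : ℕ) + 1)
    else if (i : ℕ) = (j : ℕ) + 1 then b * Real.sqrt ((j : ℕ) + 1)
    else 0

/-- The diagonal scaling vector. -/
noncomputable def dvec (n : ℕ) : Fin n → ℝ := fun i => Real.sqrt (Nat.factorial i)

lemma dvec_pos (n : ℕ) (i : Fin n) : 0 < dvec n i :=
  Real.sqrt_pos.mpr (by exact_mod_cast (Nat.factorial_pos i))

lemma diag_mul_tri (n : ℕ) (a b : ℝ) :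
    Matrix.diagonal (dvec n) * triMatrix n a b =
      symTri n a b * Matrix.diagonal (dvec n) := by
  ext i j
  rw [diagonal_mul, mul_diagonal]
  simp only [triMatrix, symTri, Matrix.of_apply]
  rcases eq_or_ne (i : ℕ) (j : ℕ) with h | h
  · have : i = j := Fin.ext h
    subst this
    simp [mul_comm]
  · rw [if_neg h, if_neg h]
    rcases eq_or_ne (j : ℕ) ((i : ℕ) + 1) with h2 | h2
    · rw [if_pos h2, if_pos h2]
      have hd : dvec n j = Real.sqrt ((i : ℕ) + 1) * Real.sqrt (Nat.factorial i) := by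
        rw [dvec, h2, Nat.factorial_succ, Nat.cast_mul, Real.sqrt_mul (by positivity)]
        norm_num
      have hs : Real.sqrt ((i : ℕ) + 1) * Real.sqrt ((i : ℕ) + 1) = ((i : ℕ) + 1 : ℝ) :=
        Real.mul_self_sqrt (by positivity)
      rw [hd]
      simp only [dvec]
      linear_combination (-(b * Real.sqrt (Nat.factorial i))) * hs
    · rw [if_neg h2, if_neg h2]
      rcases eq_or_ne (i : ℕ) ((j : ℕ) + 1) with h3 | h3
      · rw [if_pos h3, if_pos h3]
        have hd : dvec n i = Real.sqrt ((j : ℕ) + 1) * Real.sqrt (Nat.factorial j) := by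
          rw [dvec, h3, Nat.factorial_succ, Nat.cast_mul, Real.sqrt_mul (by positivity)]
          norm_num
        rw [hd]
        simp only [dvec]
        ring
      · simp [h3]

lemma charpoly_tri_eq (n : ℕ) (a b : ℝ) :
    (triMatrix n a b).charpoly = (symTri n a b).charpoly := by
  set D : Matrix (Fin n) (Fin n) ℝ[X] := (Matrix.diagonal (dvec n)).map C with hD
  have h1 : D * charmatrix (triMatrix n a b) = charmatrix (symTri n a b) * D := by
    simp only [charmatrix, RingHom.mapMatrix_apply]
    rw [mul_sub, sub_mul]
    congr 1
    · exact (Matrix.scalar_commute (X : ℝ[X]) (fun r => Commute.all _ _) D).symm ▸ rfl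
    · rw [hD, ← Matrix.map_mul, ← Matrix.map_mul, diag_mul_tri]
  have h2 := congrArg Matrix.det h1
  rw [det_mul, det_mul] at h2
  have hdet : D.det = C (∏ i, dvec n i) := by
    rw [hD, Matrix.diagonal_map (map_zero C), det_diagonal, map_prod]
  have hne : D.det ≠ 0 := by
    rw [hdet]
    exact Polynomial.C_ne_zero.mpr (Finset.prod_pos (fun i _ => dvec_pos n i)).ne'
  rw [Matrix.charpoly, Matrix.charpoly]
  rw [mul_comm (D.det)] at h2
  exact mul_right_cancel₀ hne h2

lemma symTri_symm (n : ℕ) (a b : ℝ) : (symTri n a b)ᵀ = symTri n a b := by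
  ext i j
  simp only [transpose_apply, symTri, Matrix.of_apply]
  split_ifs <;> first | rfl | omega

lemma symTri_hermitian (n : ℕ) (a b : ℝ) :
    ((symTri n a b).map (algebraMap ℝ ℂ)).IsHermitian := by
  ext i j
  simp only [conjTranspose_apply, Matrix.map_apply]
  rw [show (symTri n a b) j i = (symTri n a b) i j from by
    conv_lhs => rw [← symTri_symm n a b]
    rw [transpose_apply]]
  simp [Complex.coe_algebraMap, Complex.star_def, Complex.conj_ofReal]

/-- Every complex eigenvalue of `M_n(a,b)`, i.e. every complex root of its
characteristic polynomial, is real. -/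
theorem stmt_5 (n : ℕ) (hn : 1 ≤ n) (a b : ℝ) (z : ℂ)
    (hz : Polynomial.aeval z (triMatrix n a b).charpoly = 0) :
    z.im = 0 := by
  set S : Matrix (Fin n) (Fin n) ℂ := (symTri n a b).map (algebraMap ℝ ℂ) with hSdef
  have hS : S.IsHermitian := symTri_hermitian n a b
  have hz' : Polynomial.eval z S.charpoly = 0 := by
    rw [hSdef, Matrix.charpoly_map, ← charpoly_tri_eq, eval_map]
    rw [aeval_def] at hz
    exact hz
  have hdet : (Matrix.scalar (Fin n) z - S).det = 0 := by
    have : Polynomial.eval z S.charpoly =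
        ((charmatrix S).map (Polynomial.evalRingHom z)).det := by
      rw [Matrix.charpoly]
      simpa [RingHom.mapMatrix_apply] using RingHom.map_det (Polynomial.evalRingHom z) S.charmatrix
    rw [this] at hz'
    rw [← hz']
    congr 1
    ext i j
    rcases eq_or_ne i j with h | h
    · subst h
      simp [charmatrix_apply_eq, Matrix.sub_apply, Matrix.scalar_apply]
    · simp [charmatrix_apply_ne _ _ _ h, Matrix.sub_apply, Matrix.scalar_apply,
        Matrix.diagonal_apply_ne _ h]
  have hmem : z ∈ spectrum ℂ S := by
    rw [spectrum.mem_iff]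
    intro hu
    rw [Matrix.isUnit_iff_isUnit_det] at hu
    have : algebraMap ℂ (Matrix (Fin n) (Fin n) ℂ) z = Matrix.scalar (Fin n) z := rfl
    rw [this, hdet] at hu
    exact hu.ne_zero rfl
  rw [← Matrix.spectrum_toEuclideanLin] at hmem
  have he : Module.End.HasEigenvalue (Matrix.toEuclideanLin S) z :=
    Module.End.hasEigenvalue_iff_mem_spectrum.mpr hmem
  have hc := (Matrix.isHermitian_iff_isSymmetric.mp hS).conj_eigenvalue_eq_self he
  exact Complex.conj_eq_iff_im.mp hc
end

section
/- For every natural number n ≥ 1 and all real numbers a, b with b ≠ 0, a real number λ is an eigenvalue of the tridiagonal matrix M_n(a,b) if and only if λ = a + b·ξ for some real root ξ of the n-th probabilist's Hermite polynomial H_n. -/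
open Matrix Polynomial

lemma myDerivHermite : ∀ n : ℕ, derivative (hermite n) = (n : Polynomial ℤ) * hermite (n - 1) ∧
    derivative (hermite (n+1)) = ((n+1 : ℕ) : Polynomial ℤ) * hermite n := by
  intro n
  induction n with
  | zero => constructor <;> simp [hermite_zero, hermite_one]
  | succ m ih =>
    refine ⟨by simpa using ih.2, ?_⟩
    rw [hermite_succ (m+1), ih.2, derivative_sub, derivative_mul, derivative_X, ih.2,
      derivative_mul, derivative_natCast, ih.1, hermite_succ m, ih.1]
    push_cast
    ring

lemma hval0 (ξ : ℝ) : aeval ξ (hermite 0) = 1 := by simp [hermite_zero]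

lemma hval1 (ξ : ℝ) : aeval ξ (hermite 1) = ξ := by simp [hermite_one]

lemma hrec (ξ : ℝ) (k : ℕ) : aeval ξ (hermite (k+2)) =
    ξ * aeval ξ (hermite (k+1)) - ((k : ℝ) + 1) * aeval ξ (hermite k) := by
  rw [hermite_succ (k+1), (myDerivHermite k).2, map_sub, _root_.map_mul, aeval_X,
    _root_.map_mul, map_natCast]
  push_cast
  ring

lemma sum_ite_val {n : ℕ} (k : ℕ) (g : Fin n → ℝ) :
    ∑ j : Fin n, (if (j : ℕ) = k then g j else 0) = if h : k < n then g ⟨k, h⟩ else 0 := by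
  split
  · next h =>
    rw [Finset.sum_eq_single (⟨k, h⟩ : Fin n)]
    · simp
    · intro j _ hj
      rw [if_neg]
      intro hc
      exact hj (Fin.ext hc)
    · simp
  · next h =>
    apply Finset.sum_eq_zero
    intro j _
    rw [if_neg]
    have := j.isLt
    omega

lemma mulVec_tri {n : ℕ} (a b : ℝ) (v : Fin n → ℝ) (i : Fin n) :
    (triMatrix n a b).mulVec v i =
      (if h : 1 ≤ (i : ℕ) then b * v ⟨(i : ℕ) - 1, by omega⟩ else 0) + a * v i +
      (if h : (i : ℕ) + 1 < n then ((i : ℕ) + 1) * b * v ⟨(i : ℕ) + 1, h⟩ else 0) := by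
  unfold triMatrix
  rw [mulVec, dotProduct]
  have key : ∀ j : Fin n,
      (Matrix.of fun i j : Fin n =>
        if (i : ℕ) = (j : ℕ) then a
        else if (j : ℕ) = (i : ℕ) + 1 then ((i : ℕ) + 1 : ℝ) * b
        else if (i : ℕ) = (j : ℕ) + 1 then b
        else 0) i j * v j =
      (if 1 ≤ (i : ℕ) then (if (j : ℕ) = (i : ℕ) - 1 then b * v j else 0) else 0) +
      (if (j : ℕ) = (i : ℕ) then a * v j else 0) +
      (if (j : ℕ) = (i : ℕ) + 1 then ((i : ℕ) + 1) * b * v j else 0) := by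
    intro j
    simp only [Matrix.of_apply]
    split_ifs <;> first | ring1 | (exfalso; omega)
  simp only [key]
  rw [Finset.sum_add_distrib, Finset.sum_add_distrib, sum_ite_val, sum_ite_val]
  congr 1
  congr 1
  · by_cases hi : 1 ≤ (i : ℕ)
    · simp only [if_pos hi, dif_pos hi]
      rw [sum_ite_val]
      have hlt : (i : ℕ) - 1 < n := by omega
      rw [dif_pos hlt]
    · simp only [if_neg hi, dif_neg hi, Finset.sum_const_zero]
  · rw [dif_pos i.isLt]

/-- For `b ≠ 0`, a real `λ` is an eigenvalue of `M_n(a,b)` iff `λ = a + b ξ` for some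
real root `ξ` of the `n`-th probabilist's Hermite polynomial. -/
theorem stmt_6 (n : ℕ) (hn : 1 ≤ n) (a b : ℝ) (hb : b ≠ 0) (l : ℝ) :
    (∃ v : Fin n → ℝ, v ≠ 0 ∧ (triMatrix n a b).mulVec v = l • v) ↔
      ∃ ξ : ℝ, Polynomial.aeval ξ (Polynomial.hermite n) = 0 ∧ l = a + b * ξ := by
  constructor
  · rintro ⟨v, hv, hMv⟩
    obtain ⟨ξ, hl⟩ : ∃ ξ : ℝ, l = a + b * ξ := ⟨(l - a) / b, by field_simp; ring⟩
    refine ⟨ξ, ?_, hl⟩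
    set w : ℕ → ℝ := fun k => if h : k < n then v ⟨k, h⟩ else 0 with hwdef
    have hwlt : ∀ k (h : k < n), w k = v ⟨k, h⟩ := fun k h => dif_pos h
    have hwge : ∀ k, n ≤ k → w k = 0 := fun k h => dif_neg (by omega)
    have E : ∀ k, k < n →
        (if 1 ≤ k then b * w (k-1) else 0) + a * w k + ((k : ℝ) + 1) * b * w (k+1)
          = l * w k := by
      intro k hk
      have h1 := congrFun hMv ⟨k, hk⟩
      rw [mulVec_tri] at h1
      simp only [Pi.smul_apply, smul_eq_mul] at h1
      rw [hwlt k hk]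
      rw [show ((k : ℝ) + 1) * b * w (k+1)
          = if h : k + 1 < n then ((k : ℝ) + 1) * b * v ⟨k+1, h⟩ else 0 by
        by_cases h : k + 1 < n
        · rw [dif_pos h, hwlt (k+1) h]
        · rw [dif_neg h, hwge (k+1) (by omega), mul_zero]]
      rw [show (if 1 ≤ k then b * w (k-1) else 0)
          = if h : 1 ≤ k then b * v ⟨k-1, by omega⟩ else 0 by
        by_cases h : 1 ≤ k
        · rw [if_pos h, dif_pos h, hwlt (k-1) (by omega)]
        · rw [if_neg h, dif_neg h]]
      exact h1
    have key : ∀ k, k < n → ((Nat.factorial k : ℝ)) * w k = w 0 * aeval ξ (hermite k) := by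
      intro k
      induction k using Nat.strong_induction_on with
      | _ k ih =>
        match k with
        | 0 => intro _; simp [hval0]
        | 1 =>
          intro h1n
          have e := E 0 (by omega)
          rw [hl] at e
          rw [if_neg (by omega : ¬ (1:ℕ) ≤ 0)] at e
          have h2 : b * w 1 = b * (ξ * w 0) := by push_cast at e ⊢; linear_combination e
          have := mul_left_cancel₀ hb h2
          simp [hval1, this, Nat.factorial]
          ring
        | (m+2) =>
          intro hk
          have e := E (m+1) (by omega)
          rw [hl] at e
          rw [if_pos (by omega : 1 ≤ m + 1)] at e
          simp only [Nat.add_sub_cancel] at e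
          have i1 := ih (m+1) (by omega) (by omega)
          have i0 := ih m (by omega) (by omega)
          have h2 : b * (((m:ℝ)+2) * w (m+2)) = b * (ξ * w (m+1) - w m) := by
            push_cast at e ⊢; linear_combination e
          have A := mul_left_cancel₀ hb h2
          rw [hrec]
          rw [Nat.factorial_succ (m+1), Nat.factorial_succ m] at *
          push_cast at *
          linear_combination ((m:ℝ)+1) * (Nat.factorial m : ℝ) * A + ξ * i1 - ((m:ℝ)+1) * i0
    have hw0 : w 0 ≠ 0 := by
      intro h0
      apply hv
      funext i
      have hk := key i i.isLt
      rw [h0, zero_mul] at hk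
      have hfac : ((Nat.factorial (i : ℕ) : ℝ)) ≠ 0 := by
        exact_mod_cast Nat.factorial_ne_zero _
      have : w (i : ℕ) = 0 := by
        rcases mul_eq_zero.mp hk with h | h
        · exact absurd h hfac
        · exact h
      rw [hwlt (i : ℕ) i.isLt] at this
      simpa using this
    match n, hn with
    | 1, _ =>
      have e := E 0 (by omega)
      rw [hl] at e
      rw [if_neg (by omega : ¬ (1:ℕ) ≤ 0)] at e
      rw [hwge 1 (by omega)] at e
      have h2 : b * ξ * w 0 = 0 := by linear_combination -e
      have hξ0 : ξ = 0 := by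
        rcases mul_eq_zero.mp h2 with h | h
        · rcases mul_eq_zero.mp h with h' | h'
          · exact absurd h' hb
          · exact h'
        · exact absurd h hw0
      rw [hval1, hξ0]
    | (m+2), _ =>
      have e := E (m+1) (by omega)
      rw [hl] at e
      rw [if_pos (by omega : 1 ≤ m + 1)] at e
      simp only [Nat.add_sub_cancel] at e
      rw [hwge (m+2) (by omega), mul_zero, add_zero] at e
      have i1 := key (m+1) (by omega)
      have i0 := key m (by omega)
      have h2 : b * w m = b * (ξ * w (m+1)) := by linear_combination e
      have A := mul_left_cancel₀ hb h2
      have hfin : w 0 * aeval ξ (hermite (m+2)) = w 0 * 0 := by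
        rw [hrec, mul_zero]
        rw [Nat.factorial_succ m] at i1
        push_cast at i1 i0 ⊢
        linear_combination (-ξ) * i1 + ((m:ℝ)+1) * i0 - ((m:ℝ)+1) * (Nat.factorial m : ℝ) * A
      exact mul_left_cancel₀ hw0 hfin
  · rintro ⟨ξ, hroot, hl⟩
    refine ⟨fun i => aeval ξ (hermite (i : ℕ)) / (Nat.factorial (i : ℕ) : ℝ), ?_, ?_⟩
    · intro h0
      have := congrFun h0 ⟨0, by omega⟩
      simp [hval0] at this
    · funext i
      rw [mulVec_tri]
      simp only [Pi.smul_apply, smul_eq_mul, hl]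
      have hfac : ∀ m : ℕ, ((Nat.factorial m : ℝ)) ≠ 0 := fun m => by
        exact_mod_cast Nat.factorial_ne_zero m
      by_cases h1 : 1 ≤ (i : ℕ) <;> by_cases h2 : (i : ℕ) + 1 < n
      · -- middle rows
        rw [dif_pos h1, dif_pos h2]
        obtain ⟨m, hm⟩ : ∃ m, (i : ℕ) = m + 1 := ⟨(i : ℕ) - 1, by omega⟩
        simp only [hm]
        rw [show m + 1 + 1 = m + 2 from rfl, hrec ξ m,
          Nat.factorial_succ (m+1), Nat.factorial_succ m]
        push_cast
        field_simp
        ring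
      · -- last row, n = i+1 ≥ 2
        rw [dif_pos h1, dif_neg h2]
        obtain ⟨m, hm⟩ : ∃ m, (i : ℕ) = m + 1 := ⟨(i : ℕ) - 1, by omega⟩
        have hmn : n = m + 2 := by have := i.isLt; omega
        rw [hmn] at hroot
        have hr := hrec ξ m
        rw [hroot] at hr
        simp only [hm]
        rw [Nat.factorial_succ m]
        push_cast
        generalize hA : (Polynomial.aeval ξ) (Polynomial.hermite m) = H0
        generalize hB : (Polynomial.aeval ξ) (Polynomial.hermite (m+1)) = H1
        rw [hA, hB] at hr
        have hne1 : ((m:ℝ) + 1) ≠ 0 := by positivity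
        rw [add_zero]
        field_simp
        linear_combination b * hr
      · -- first row, n ≥ 2
        rw [dif_neg h1, dif_pos h2]
        have h0 : (i : ℕ) = 0 := by omega
        simp only [h0]
        norm_num [hval0, hval1, Nat.factorial]
      · -- n = 1
        rw [dif_neg h1, dif_neg h2]
        have h0 : (i : ℕ) = 0 := by omega
        have hn1 : n = 1 := by have := i.isLt; omega
        rw [hn1] at hroot
        rw [hval1] at hroot
        simp only [h0]
        norm_num [hval0, Nat.factorial, hroot]
end

section
/- For every natural number n, every complex root of the n-th probabilist's Hermite polynomial H_n is real (has imaginary part zero). -/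
open Polynomial Complex

lemma derivative_hermite' (n : ℕ) :
    derivative (hermite (n+1)) = (n+1 : ℤ[X]) * hermite n := by
  induction n with
  | zero => simp [hermite_one, hermite_zero]
  | succ m ih =>
    rw [hermite_succ (m+1), derivative_sub, derivative_mul, derivative_X, one_mul, ih,
      derivative_mul, hermite_succ m]
    simp only [derivative_natCast, derivative_one, derivative_add, derivative_ofNat]
    push_cast
    ring_nf

lemma conj_aeval (z : ℂ) (P : ℤ[X]) :
    (starRingEnd ℂ) (aeval z P) = aeval ((starRingEnd ℂ) z) P :=
  (aeval_algHom_apply ((starRingEnd ℂ).toIntAlgHom) z P).symm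

noncomputable def herS (z : ℂ) : ℕ → ℝ
  | 0 => 1
  | n+1 => Complex.normSq (aeval z (hermite (n+1))) + (n+1) * herS z n

lemma herS_pos (z : ℂ) (n : ℕ) : 0 < herS z n := by
  induction n with
  | zero => norm_num [herS]
  | succ m ih =>
    simp only [herS]
    nlinarith [Complex.normSq_nonneg ((aeval z (hermite (m+1))))]

lemma cd (z : ℂ) (n : ℕ) :
    aeval z (hermite (n+1)) * (starRingEnd ℂ) (aeval z (hermite n))
      - aeval z (hermite n) * (starRingEnd ℂ) (aeval z (hermite (n+1)))
    = (z - (starRingEnd ℂ) z) * (herS z n : ℂ) := by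
  induction n with
  | zero =>
    simp [hermite_one, hermite_zero, herS]
  | succ m ih =>
    have hrec : aeval z (hermite (m+2)) =
        z * aeval z (hermite (m+1)) - (m+1 : ℂ) * aeval z (hermite m) := by
      rw [hermite_succ (m+1), map_sub, map_mul, aeval_X, derivative_hermite' m, map_mul]
      simp
    have hrecc : (starRingEnd ℂ) (aeval z (hermite (m+2))) =
        (starRingEnd ℂ) z * (starRingEnd ℂ) (aeval z (hermite (m+1)))
          - (m+1 : ℂ) * (starRingEnd ℂ) (aeval z (hermite m)) := by
      rw [hrec]; simp
    have hns : (aeval z (hermite (m+1))) * (starRingEnd ℂ) (aeval z (hermite (m+1)))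
        = (Complex.normSq (aeval z (hermite (m+1))) : ℂ) := by
      rw [Complex.mul_conj]
    have hS : (herS z (m+1) : ℂ) = (Complex.normSq (aeval z (hermite (m+1))) : ℂ)
        + (m+1 : ℂ) * (herS z m : ℂ) := by
      simp only [herS]; push_cast; ring
    rw [hrecc, hrec, hS]
    linear_combination (z - (starRingEnd ℂ) z) * hns + (m+1 : ℂ) * ih

/-- Every complex root of the `n`-th probabilist's Hermite polynomial is real. -/
theorem stmt_7 (n : ℕ) (z : ℂ)
    (hz : Polynomial.aeval z (Polynomial.hermite n) = 0) :
    z.im = 0 := by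
  cases n with
  | zero => simp [hermite_zero] at hz
  | succ m =>
    have h := cd z m
    rw [hz] at h
    simp only [map_zero, zero_mul, mul_zero, sub_zero, zero_sub, neg_eq_zero] at h
    have hS : (herS z m : ℂ) ≠ 0 := by
      exact_mod_cast (herS_pos z m).ne'
    have hz2 : z - (starRingEnd ℂ) z = 0 := by
      rcases mul_eq_zero.mp h.symm with h1 | h1
      · exact h1
      · exact absurd h1 hS
    have : (starRingEnd ℂ) z = z := by linear_combination -hz2
    simpa [Complex.conj_eq_iff_im] using this
end

section
/- Let μ be a Borel probability measure on ℝ whose cumulative distribution function F(λ) = μ((−∞, λ]) is continuous. Then for all natural numbers j, l and k < 2^j, m < 2^l, the composed Haar wavelets are orthonormal with respect to μ: ∫ ψ_{jk}(F(λ))·ψ_{lm}(F(λ)) dμ(λ) equals 1 if (j,k) = (l,m) and 0 otherwise. -/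
open MeasureTheory

/-- The Haar mother wavelet: `1` on `[0, 1/2)`, `-1` on `[1/2, 1)`, `0` elsewhere. -/
noncomputable def motherHaar (u : ℝ) : ℝ :=
  if 0 ≤ u ∧ u < 1 / 2 then 1
  else if 1 / 2 ≤ u ∧ u < 1 then -1
  else 0

/-- The Haar wavelet `ψ_{jk}(u) = 2^{j/2} ψ(2^j u - k)`. -/
noncomputable def haarW (j k : ℕ) (u : ℝ) : ℝ :=
  (2 : ℝ) ^ ((j : ℝ) / 2) * motherHaar ((2 : ℝ) ^ j * u - (k : ℝ))

/-! ### Auxiliary: dyadic points -/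

noncomputable def dy (j p : ℕ) : ℝ := (p : ℝ) / 2 ^ j

lemma dy_le_dy {j : ℕ} {p q : ℕ} (h : p ≤ q) : dy j p ≤ dy j q := by
  unfold dy
  have h' : (p:ℝ) ≤ q := by exact_mod_cast h
  gcongr


lemma dy_level {j l : ℕ} (h : j ≤ l) (p : ℕ) : dy j p = dy l (p * 2 ^ (l - j)) := by
  unfold dy
  have : (2:ℝ) ^ (l - j) * 2 ^ j = 2 ^ l := by
    rw [← pow_add]; congr 1; omega
  push_cast
  rw [div_eq_div_iff (by positivity) (by positivity)]
  nlinarith [this]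

lemma dy_succ_sub (j p : ℕ) : dy j (p + 1) - dy j p = 1 / 2 ^ j := by
  unfold dy; push_cast; ring

/-! ### haarW as a combination of indicators -/

lemma haarW_eq (j k : ℕ) (u : ℝ) :
    haarW j k u = (2 : ℝ) ^ ((j : ℝ) / 2) *
      ((Set.Ico (dy (j+1) (2*k)) (dy (j+1) (2*k+1))).indicator 1 u
        - (Set.Ico (dy (j+1) (2*k+1)) (dy (j+1) (2*k+2))).indicator 1 u) := by
  have h2 : (0:ℝ) < 2 ^ (j+1) := by positivity
  have hmem1 : (0 ≤ (2:ℝ) ^ j * u - k ∧ (2:ℝ) ^ j * u - k < 1/2) ↔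
      u ∈ Set.Ico (dy (j+1) (2*k)) (dy (j+1) (2*k+1)) := by
    unfold dy
    rw [Set.mem_Ico, div_le_iff₀ h2, lt_div_iff₀ h2]
    push_cast
    constructor
    · rintro ⟨h1, h2'⟩
      constructor <;> nlinarith [pow_succ (2:ℝ) j]
    · rintro ⟨h1, h2'⟩
      constructor <;> nlinarith [pow_succ (2:ℝ) j]
  have hmem2 : ((1:ℝ)/2 ≤ (2:ℝ) ^ j * u - k ∧ (2:ℝ) ^ j * u - k < 1) ↔
      u ∈ Set.Ico (dy (j+1) (2*k+1)) (dy (j+1) (2*k+2)) := by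
    unfold dy
    rw [Set.mem_Ico, div_le_iff₀ h2, lt_div_iff₀ h2]
    push_cast
    constructor
    · rintro ⟨h1, h2'⟩
      constructor <;> nlinarith [pow_succ (2:ℝ) j]
    · rintro ⟨h1, h2'⟩
      constructor <;> nlinarith [pow_succ (2:ℝ) j]
  unfold haarW motherHaar
  by_cases h1 : (0 ≤ (2:ℝ) ^ j * u - k ∧ (2:ℝ) ^ j * u - k < 1/2)
  · have hu1 : u ∈ Set.Ico (dy (j+1) (2*k)) (dy (j+1) (2*k+1)) := hmem1.1 h1
    have hu2 : u ∉ Set.Ico (dy (j+1) (2*k+1)) (dy (j+1) (2*k+2)) := by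
      intro hc
      have := hmem2.2 hc
      linarith [h1.2, this.1]
    rw [if_pos h1, Set.indicator_of_mem hu1, Set.indicator_of_notMem hu2]
    simp
  · by_cases h2' : ((1:ℝ)/2 ≤ (2:ℝ) ^ j * u - k ∧ (2:ℝ) ^ j * u - k < 1)
    · have hu2 : u ∈ Set.Ico (dy (j+1) (2*k+1)) (dy (j+1) (2*k+2)) := hmem2.1 h2'
      have hu1 : u ∉ Set.Ico (dy (j+1) (2*k)) (dy (j+1) (2*k+1)) := fun hc => h1 (hmem1.2 hc)
      rw [if_neg h1, if_pos h2', Set.indicator_of_mem hu2, Set.indicator_of_notMem hu1]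
      simp
    · have hu1 : u ∉ Set.Ico (dy (j+1) (2*k)) (dy (j+1) (2*k+1)) := fun hc => h1 (hmem1.2 hc)
      have hu2 : u ∉ Set.Ico (dy (j+1) (2*k+1)) (dy (j+1) (2*k+2)) := fun hc => h2' (hmem2.2 hc)
      rw [if_neg h1, if_neg h2', Set.indicator_of_notMem hu1, Set.indicator_of_notMem hu2]
      simp

lemma measurable_haarW (j k : ℕ) : Measurable (haarW j k) := by
  have : haarW j k = fun u => (2 : ℝ) ^ ((j : ℝ) / 2) *
      ((Set.Ico (dy (j+1) (2*k)) (dy (j+1) (2*k+1))).indicator 1 u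
        - (Set.Ico (dy (j+1) (2*k+1)) (dy (j+1) (2*k+2))).indicator 1 u) := by
    funext u; exact haarW_eq j k u
  rw [this]
  exact measurable_const.mul
    (((measurable_const.indicator measurableSet_Ico).sub
      (measurable_const.indicator measurableSet_Ico)))

lemma haarW_eq_zero {j k : ℕ} (hk : k < 2 ^ j) {u : ℝ} (hu : u ∉ Set.Icc (0:ℝ) 1) :
    haarW j k u = 0 := by
  rw [haarW_eq]
  have h0 : (0:ℝ) ≤ dy (j+1) (2*k) := by unfold dy; positivity
  have h1 : dy (j+1) (2*k+2) ≤ 1 := by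
    unfold dy
    rw [div_le_one (by positivity)]
    have hp : 2 ^ (j+1) = 2 * 2 ^ j := by rw [pow_succ]; ring
    have hn : (2*k+2 : ℕ) ≤ 2 ^ (j+1) := by omega
    calc ((2*k+2 : ℕ) : ℝ) ≤ ((2 ^ (j+1) : ℕ) : ℝ) := by exact_mod_cast hn
      _ = 2 ^ (j+1) := by push_cast; ring
  have hu' : u < 0 ∨ 1 < u := by
    simp only [Set.mem_Icc, not_and_or, not_le] at hu
    exact hu
  have hd1 : dy (j+1) (2*k) ≤ dy (j+1) (2*k+1) := dy_le_dy (by omega)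
  have hd2 : dy (j+1) (2*k+1) ≤ dy (j+1) (2*k+2) := dy_le_dy (by omega)
  have n1 : u ∉ Set.Ico (dy (j+1) (2*k)) (dy (j+1) (2*k+1)) := by
    rintro ⟨ha, hb⟩
    rcases hu' with h | h <;> linarith
  have n2 : u ∉ Set.Ico (dy (j+1) (2*k+1)) (dy (j+1) (2*k+2)) := by
    rintro ⟨ha, hb⟩
    rcases hu' with h | h <;> linarith
  rw [Set.indicator_of_notMem n1, Set.indicator_of_notMem n2]
  ring

/-! ### L : lengths of intersections -/

noncomputable def LL (a b c d : ℝ) : ℝ := (volume (Set.Ico a b ∩ Set.Ico c d)).toReal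

lemma LL_eq (a b c d : ℝ) : LL a b c d = max (min b d - max a c) 0 := by
  rw [LL, Set.Ico_inter_Ico, Real.volume_Ico, ENNReal.toReal_ofReal']

lemma LL_zero_left {a b c d : ℝ} (h : b ≤ c) : LL a b c d = 0 := by
  rw [LL_eq, max_eq_right]
  have : min b d ≤ max a c := le_trans (min_le_left _ _) (le_trans h (le_max_right _ _))
  linarith

lemma LL_zero_right {a b c d : ℝ} (h : d ≤ a) : LL a b c d = 0 := by
  rw [LL_eq, max_eq_right]
  have : min b d ≤ max a c := le_trans (min_le_right _ _) (le_trans h (le_max_left _ _))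
  linarith

lemma LL_full {a b c d : ℝ} (h1 : a ≤ c) (h2 : d ≤ b) (h3 : c ≤ d) : LL a b c d = d - c := by
  rw [LL_eq, min_eq_right h2, max_eq_right h1, max_eq_left (by linarith)]

lemma integrable_ind_mul (a b c d : ℝ) :
    Integrable (fun u => (Set.Ico a b).indicator (1:ℝ→ℝ) u * (Set.Ico c d).indicator 1 u)
      volume := by
  have : (fun u => (Set.Ico a b).indicator (1:ℝ→ℝ) u * (Set.Ico c d).indicator 1 u)
      = (Set.Ico a b ∩ Set.Ico c d).indicator 1 := by
    rw [Set.inter_indicator_one]; rfl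
  rw [this]
  rw [integrable_indicator_iff (measurableSet_Ico.inter measurableSet_Ico)]
  refine integrableOn_const (ne_of_lt ?_) (by simp)
  exact lt_of_le_of_lt (measure_mono Set.inter_subset_left) measure_Ico_lt_top

lemma integral_ind_mul (a b c d : ℝ) :
    ∫ u, (Set.Ico a b).indicator (1:ℝ→ℝ) u * (Set.Ico c d).indicator 1 u = LL a b c d := by
  have : (fun u => (Set.Ico a b).indicator (1:ℝ→ℝ) u * (Set.Ico c d).indicator 1 u)
      = (Set.Ico a b ∩ Set.Ico c d).indicator 1 := by
    rw [Set.inter_indicator_one]; rfl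
  rw [this, integral_indicator_one (measurableSet_Ico.inter measurableSet_Ico)]
  rfl

/-! ### The main wavelet integral -/

lemma haar_mul_integral (j l k m : ℕ) :
    ∫ u, haarW j k u * haarW l m u =
      (2 : ℝ) ^ ((j : ℝ) / 2) * (2 : ℝ) ^ ((l : ℝ) / 2) *
        ((LL (dy (j+1) (2*k)) (dy (j+1) (2*k+1)) (dy (l+1) (2*m)) (dy (l+1) (2*m+1))
          - LL (dy (j+1) (2*k)) (dy (j+1) (2*k+1)) (dy (l+1) (2*m+1)) (dy (l+1) (2*m+2)))
         - (LL (dy (j+1) (2*k+1)) (dy (j+1) (2*k+2)) (dy (l+1) (2*m)) (dy (l+1) (2*m+1))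
          - LL (dy (j+1) (2*k+1)) (dy (j+1) (2*k+2)) (dy (l+1) (2*m+1)) (dy (l+1) (2*m+2)))) := by
  set A := (Set.Ico (dy (j+1) (2*k)) (dy (j+1) (2*k+1))).indicator (1:ℝ→ℝ) with hA
  set B := (Set.Ico (dy (j+1) (2*k+1)) (dy (j+1) (2*k+2))).indicator (1:ℝ→ℝ) with hB
  set C := (Set.Ico (dy (l+1) (2*m)) (dy (l+1) (2*m+1))).indicator (1:ℝ→ℝ) with hC
  set D := (Set.Ico (dy (l+1) (2*m+1)) (dy (l+1) (2*m+2))).indicator (1:ℝ→ℝ) with hD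
  have step : (fun u => haarW j k u * haarW l m u) = fun u =>
      ((2 : ℝ) ^ ((j : ℝ) / 2) * (2 : ℝ) ^ ((l : ℝ) / 2)) *
        ((A u * C u - A u * D u) - (B u * C u - B u * D u)) := by
    funext u
    rw [haarW_eq j k u, haarW_eq l m u]
    ring
  rw [step, integral_const_mul]
  have iAC := integrable_ind_mul (dy (j+1) (2*k)) (dy (j+1) (2*k+1)) (dy (l+1) (2*m)) (dy (l+1) (2*m+1))
  have iAD := integrable_ind_mul (dy (j+1) (2*k)) (dy (j+1) (2*k+1)) (dy (l+1) (2*m+1)) (dy (l+1) (2*m+2))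
  have iBC := integrable_ind_mul (dy (j+1) (2*k+1)) (dy (j+1) (2*k+2)) (dy (l+1) (2*m)) (dy (l+1) (2*m+1))
  have iBD := integrable_ind_mul (dy (j+1) (2*k+1)) (dy (j+1) (2*k+2)) (dy (l+1) (2*m)) (dy (l+1) (2*m+1))
  have iBD' := integrable_ind_mul (dy (j+1) (2*k+1)) (dy (j+1) (2*k+2)) (dy (l+1) (2*m+1)) (dy (l+1) (2*m+2))
  have i1 : Integrable (fun u => A u * C u - A u * D u) volume := iAC.sub iAD
  have i2 : Integrable (fun u => B u * C u - B u * D u) volume := iBC.sub iBD'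
  rw [integral_sub i1 i2, integral_sub iAC iAD, integral_sub iBC iBD']
  simp only [hA, hB, hC, hD, integral_ind_mul]

lemma rpow_half_sq (j : ℕ) : (2:ℝ) ^ ((j:ℝ)/2) * (2:ℝ) ^ ((j:ℝ)/2) = 2 ^ j := by
  rw [← Real.rpow_add two_pos]
  have : (j:ℝ)/2 + (j:ℝ)/2 = (j:ℕ) := by push_cast; ring
  rw [this, Real.rpow_natCast]

/-- Orthonormality of Haar wavelets w.r.t. Lebesgue measure. -/
lemma haar_zero_of_lt {j l : ℕ} (k m : ℕ) (hjl : j < l) :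
    ∫ u, haarW j k u * haarW l m u = 0 := by
  rw [haar_mul_integral]
  have key : ∀ p : ℕ,
      LL (dy (j+1) p) (dy (j+1) (p+1)) (dy (l+1) (2*m)) (dy (l+1) (2*m+1)) =
      LL (dy (j+1) p) (dy (j+1) (p+1)) (dy (l+1) (2*m+1)) (dy (l+1) (2*m+2)) := by
    intro p
    have hjl' : j + 1 ≤ l := hjl
    have e0 : dy l m = dy (l+1) (2*m) := by
      rw [dy_level (Nat.le_succ l) m, show l+1-l = 1 by omega]; congr 1; ring
    have e1 : dy l (m+1) = dy (l+1) (2*m+2) := by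
      rw [dy_level (Nat.le_succ l) (m+1), show l+1-l = 1 by omega]; congr 1; ring
    have ep : dy (j+1) p = dy l (p * 2 ^ (l - (j+1))) := dy_level hjl' p
    have ep1 : dy (j+1) (p+1) = dy l ((p+1) * 2 ^ (l - (j+1))) := dy_level hjl' (p+1)
    have hd : (1:ℕ) ≤ 2 ^ (l - (j+1)) := Nat.one_le_two_pow
    -- trichotomy on ℕ
    rcases lt_or_ge m (p * 2 ^ (l - (j+1))) with hlt | hge
    · -- m + 1 ≤ p * 2^d : wavelet l-interval entirely left of the j-interval
      have h1 : dy (l+1) (2*m+1) ≤ dy (j+1) p := by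
        calc dy (l+1) (2*m+1) ≤ dy (l+1) (2*m+2) := dy_le_dy (by omega)
          _ = dy l (m+1) := e1.symm
          _ ≤ dy l (p * 2 ^ (l - (j+1))) := dy_le_dy (Nat.succ_le_of_lt hlt)
          _ = dy (j+1) p := ep.symm
      have h2 : dy (l+1) (2*m+2) ≤ dy (j+1) p := by
        calc dy (l+1) (2*m+2) = dy l (m+1) := e1.symm
          _ ≤ dy l (p * 2 ^ (l - (j+1))) := dy_le_dy (Nat.succ_le_of_lt hlt)
          _ = dy (j+1) p := ep.symm
      rw [LL_zero_right h1, LL_zero_right h2]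
    · rcases le_or_gt ((p+1) * 2 ^ (l - (j+1))) m with hge2 | hlt2
      · -- j-interval entirely left of the l-interval
        have h1 : dy (j+1) (p+1) ≤ dy (l+1) (2*m) := by
          calc dy (j+1) (p+1) = dy l ((p+1) * 2 ^ (l - (j+1))) := ep1
            _ ≤ dy l m := dy_le_dy hge2
            _ = dy (l+1) (2*m) := e0
        have h2 : dy (j+1) (p+1) ≤ dy (l+1) (2*m+1) := by
          calc dy (j+1) (p+1) ≤ dy (l+1) (2*m) := h1
            _ ≤ dy (l+1) (2*m+1) := dy_le_dy (by omega)
        rw [LL_zero_left h1, LL_zero_left h2]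
      · -- containment : l-interval inside the j-interval
        have ha : dy (j+1) p ≤ dy (l+1) (2*m) := by
          calc dy (j+1) p = dy l (p * 2 ^ (l - (j+1))) := ep
            _ ≤ dy l m := dy_le_dy hge
            _ = dy (l+1) (2*m) := e0
        have hb : dy (l+1) (2*m+2) ≤ dy (j+1) (p+1) := by
          calc dy (l+1) (2*m+2) = dy l (m+1) := e1.symm
            _ ≤ dy l ((p+1) * 2 ^ (l - (j+1))) := dy_le_dy (Nat.succ_le_of_lt hlt2)
            _ = dy (j+1) (p+1) := ep1.symm
        rw [LL_full ha (le_trans (dy_le_dy (by omega)) hb) (dy_le_dy (by omega)),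
          LL_full (le_trans ha (dy_le_dy (by omega))) hb (dy_le_dy (by omega))]
        have q1 := dy_succ_sub (l+1) (2*m)
        have q2 := dy_succ_sub (l+1) (2*m+1)
        rw [show 2*m+1+1 = 2*m+2 by omega] at q2
        linarith
  rw [key (2*k), key (2*k+1)]
  ring

lemma haar_ortho_vol (j l k m : ℕ) :
    ∫ u, haarW j k u * haarW l m u = if (j, k) = (l, m) then 1 else 0 := by
  rcases lt_trichotomy j l with hjl | rfl | hlj
  · rw [if_neg (by simp; omega), haar_zero_of_lt k m hjl]
  · rcases eq_or_ne k m with rfl | hkm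
    · rw [if_pos rfl, haar_mul_integral]
      have h01 : dy (j+1) (2*k) ≤ dy (j+1) (2*k+1) := dy_le_dy (by omega)
      have h12 : dy (j+1) (2*k+1) ≤ dy (j+1) (2*k+2) := dy_le_dy (by omega)
      rw [LL_full (le_refl (dy (j+1) (2*k))) (le_refl (dy (j+1) (2*k+1))) h01,
        LL_zero_left (le_refl (dy (j+1) (2*k+1))),
        LL_zero_right (le_refl (dy (j+1) (2*k+1))),
        LL_full (le_refl (dy (j+1) (2*k+1))) (le_refl (dy (j+1) (2*k+2))) h12]
      have e1 := dy_succ_sub (j+1) (2*k)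
      have e2 := dy_succ_sub (j+1) (2*k+1)
      rw [show 2*k+1+1 = 2*k+2 by omega] at e2
      rw [rpow_half_sq]
      have hp : (2:ℝ) ^ (j+1) = 2 ^ j * 2 := pow_succ 2 j
      have h2 : (0:ℝ) < 2 ^ j := by positivity
      have : dy (j+1) (2*k+1) - dy (j+1) (2*k) - 0 -
          (0 - (dy (j+1) (2*k+2) - dy (j+1) (2*k+1))) = 1 / 2 ^ j := by
        rw [e1, e2, hp]
        field_simp
        ring
      rw [this]
      field_simp
    · rw [if_neg (by simp [hkm]), haar_mul_integral]
      rcases lt_or_gt_of_ne hkm with h | h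
      · have hle : dy (j+1) (2*k+2) ≤ dy (j+1) (2*m) := dy_le_dy (by omega)
        have h1 : dy (j+1) (2*k+1) ≤ dy (j+1) (2*m) := le_trans (dy_le_dy (by omega)) hle
        rw [LL_zero_left h1, LL_zero_left (le_trans h1 (dy_le_dy (by omega))),
          LL_zero_left hle, LL_zero_left (le_trans hle (dy_le_dy (by omega)))]
        ring
      · have hle : dy (j+1) (2*m+2) ≤ dy (j+1) (2*k) := dy_le_dy (by omega)
        have h1 : dy (j+1) (2*m+1) ≤ dy (j+1) (2*k) := le_trans (dy_le_dy (by omega)) hle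
        rw [LL_zero_right h1, LL_zero_right hle,
          LL_zero_right (le_trans h1 (dy_le_dy (by omega))),
          LL_zero_right (le_trans hle (dy_le_dy (by omega)))]
        ring
  · rw [if_neg (by simp; omega)]
    have : (fun u => haarW j k u * haarW l m u) = fun u => haarW l m u * haarW j k u := by
      funext u; ring
    rw [this, haar_zero_of_lt m k hlj]

/-! ### The probability integral transform and the main theorem -/

/-- If `μ` is a Borel probability measure on `ℝ` with continuous CDF
`F(λ) = μ((-∞, λ])`, then the composed Haar wavelets `ψ_{jk} ∘ F` are orthonormal
with respect to `μ`. -/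
theorem stmt_11 (μ : Measure ℝ) [IsProbabilityMeasure μ]
    (F : ℝ → ℝ) (hF : ∀ t : ℝ, F t = (μ (Set.Iic t)).toReal) (hFc : Continuous F)
    (j l k m : ℕ) (hk : k < 2 ^ j) (hm : m < 2 ^ l) :
    ∫ t, haarW j k (F t) * haarW l m (F t) ∂μ =
      if (j, k) = (l, m) then 1 else 0 := by
  have hmF : Measurable F := hFc.measurable
  have hFmono : Monotone F := by
    intro s t hst
    rw [hF s, hF t]
    exact ENNReal.toReal_mono (measure_ne_top μ _) (measure_mono (Set.Iic_subset_Iic.2 hst))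
  have hofReal : ∀ t, ENNReal.ofReal (F t) = μ (Set.Iic t) := by
    intro t; rw [hF t]; exact ENNReal.ofReal_toReal (measure_ne_top μ _)
  have htop : Filter.Tendsto F Filter.atTop (nhds 1) := by
    have h1 := tendsto_measure_Iic_atTop (μ := μ)
    have h2 : Filter.Tendsto (fun t : ℝ => (μ (Set.Iic t)).toReal) Filter.atTop
        (nhds (μ Set.univ).toReal) :=
      (ENNReal.tendsto_toReal (measure_ne_top μ _)).comp h1
    have hFf : F = fun t : ℝ => (μ (Set.Iic t)).toReal := funext hF
    rw [hFf]
    simpa [measure_univ] using h2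
  have hsmall : ∀ u : ℝ, 0 < u → ∃ t, F t < u := by
    intro u hu
    by_contra hcon; push_neg at hcon
    have h1 : ∀ n : ℕ, ENNReal.ofReal u ≤ μ (Set.Iic (-(n:ℝ))) := fun n => by
      rw [← hofReal]; exact ENNReal.ofReal_le_ofReal (hcon _)
    have h2 : Filter.Tendsto (fun n : ℕ => μ (Set.Iic (-(n:ℝ)))) Filter.atTop
        (nhds (μ (⋂ n : ℕ, Set.Iic (-(n:ℝ))))) :=
      tendsto_measure_iInter_atTop (fun n => measurableSet_Iic.nullMeasurableSet)
        (fun a b hab => Set.Iic_subset_Iic.2 (by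
          have : (a:ℝ) ≤ b := Nat.cast_le.2 hab
          linarith)) ⟨0, measure_ne_top μ _⟩
    have hempty : (⋂ n : ℕ, Set.Iic (-(n:ℝ))) = ∅ := by
      ext x
      simp only [Set.mem_iInter, Set.mem_Iic, Set.mem_empty_iff_false, iff_false]
      push_neg
      obtain ⟨n, hn⟩ := exists_nat_gt (-x)
      exact ⟨n, by linarith⟩
    rw [hempty, measure_empty] at h2
    have hle : ENNReal.ofReal u ≤ 0 := ge_of_tendsto' h2 h1
    simp only [le_zero_iff, ENNReal.ofReal_eq_zero] at hle
    linarith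
  have key : ∀ u : ℝ, μ (F ⁻¹' Set.Iic u) = (volume.restrict (Set.Icc (0:ℝ) 1)) (Set.Iic u) := by
    intro u
    rw [Measure.restrict_apply measurableSet_Iic]
    rcases lt_or_ge u 0 with hu | hu
    · have h1 : Set.Iic u ∩ Set.Icc (0:ℝ) 1 = ∅ := by
        apply Set.eq_empty_iff_forall_notMem.2
        rintro x ⟨hx1, hx2, _⟩
        simp only [Set.mem_Iic] at hx1
        linarith
      have h2 : F ⁻¹' Set.Iic u = ∅ := by
        apply Set.eq_empty_iff_forall_notMem.2
        intro t ht
        have h0 : 0 ≤ F t := by rw [hF t]; exact ENNReal.toReal_nonneg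
        have : F t ≤ u := ht
        linarith
      rw [h1, h2, measure_empty, measure_empty]
    rcases le_or_gt 1 u with hu1 | hu1
    · have h1 : Set.Iic u ∩ Set.Icc (0:ℝ) 1 = Set.Icc 0 1 :=
        Set.inter_eq_self_of_subset_right (fun x hx => le_trans hx.2 hu1)
      have hFle : ∀ t, F t ≤ 1 := fun t => by
        rw [hF t]
        calc (μ (Set.Iic t)).toReal ≤ (μ Set.univ).toReal :=
              ENNReal.toReal_mono (measure_ne_top μ _) (measure_mono (Set.subset_univ _))
          _ = 1 := by simp [measure_univ]
      have h2 : F ⁻¹' Set.Iic u = Set.univ :=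
        Set.eq_univ_of_forall (fun t => le_trans (hFle t) hu1)
      rw [h1, h2, measure_univ, Real.volume_Icc]
      norm_num
    · have h1 : Set.Iic u ∩ Set.Icc (0:ℝ) 1 = Set.Icc 0 u := by
        ext x
        simp only [Set.mem_inter_iff, Set.mem_Iic, Set.mem_Icc]
        constructor
        · rintro ⟨ha, hb, _⟩; exact ⟨hb, ha⟩
        · rintro ⟨ha, hb⟩; exact ⟨hb, ha, by linarith⟩
      rw [h1, Real.volume_Icc]
      set A := F ⁻¹' Set.Iic u with hA
      by_cases hne : A.Nonempty
      · have hex : ∃ t, u < F t := by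
          have hev : ∀ᶠ t in Filter.atTop, u < F t :=
            htop.eventually (eventually_gt_nhds hu1)
          exact hev.exists
        have hbdd : BddAbove A := by
          obtain ⟨t₀, ht₀⟩ := hex
          refine ⟨t₀, fun x hx => ?_⟩
          by_contra hlt; push_neg at hlt
          have hle := hFmono hlt.le
          have : F x ≤ u := hx
          linarith
        have hclosed : IsClosed A := isClosed_Iic.preimage hFc
        have haA : sSup A ∈ A := hclosed.csSup_mem hne hbdd
        have hIic : A = Set.Iic (sSup A) := by
          apply Set.Subset.antisymm
          · exact fun x hx => le_csSup hbdd hx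
          · intro x hx
            have : F x ≤ F (sSup A) := hFmono hx
            exact le_trans this haA
        have hFa : F (sSup A) = u := by
          apply le_antisymm haA
          have htend : Filter.Tendsto F (nhdsWithin (sSup A) (Set.Ioi (sSup A)))
              (nhds (F (sSup A))) :=
            (hFc.tendsto (sSup A)).mono_left nhdsWithin_le_nhds
          refine ge_of_tendsto htend ?_
          filter_upwards [self_mem_nhdsWithin] with x hx
          by_contra hcon; push_neg at hcon
          have hxA : x ∈ A := le_of_lt hcon
          rw [hIic] at hxA
          exact absurd (Set.mem_Iic.1 hxA) (not_le.2 (Set.mem_Ioi.1 hx))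
        rw [hIic, ← hofReal, hFa, sub_zero]
      · have hAempty : A = ∅ := Set.not_nonempty_iff_eq_empty.1 hne
        have hu0 : u ≤ 0 := by
          by_contra hpos; push_neg at hpos
          obtain ⟨t, ht⟩ := hsmall u hpos
          have : t ∈ A := le_of_lt ht
          rw [hAempty] at this
          exact this
        have huz : u = 0 := le_antisymm hu0 hu
        rw [hAempty, measure_empty, huz]
        simp
  have hmap : Measure.map F μ = volume.restrict (Set.Icc 0 1) := by
    haveI : IsProbabilityMeasure (Measure.map F μ) := Measure.isProbabilityMeasure_map hmF.aemeasurable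
    refine Measure.ext_of_Iic (Measure.map F μ) _ (fun u => ?_)
    rw [Measure.map_apply hmF measurableSet_Iic]
    exact key u
  have hg : Measurable (fun u => haarW j k u * haarW l m u) :=
    (measurable_haarW j k).mul (measurable_haarW l m)
  have h1 : ∫ t, haarW j k (F t) * haarW l m (F t) ∂μ
      = ∫ u, haarW j k u * haarW l m u ∂(Measure.map F μ) :=
    (integral_map hmF.aemeasurable hg.aestronglyMeasurable).symm
  rw [h1, hmap]
  have h2 : ∫ u in Set.Icc (0:ℝ) 1, haarW j k u * haarW l m u
      = ∫ u, haarW j k u * haarW l m u :=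
    setIntegral_eq_integral_of_forall_compl_eq_zero (fun u hu => by
      rw [haarW_eq_zero hk hu]; ring)
  rw [h2, haar_ortho_vol]
end

section
/- Let μ be a Borel probability measure on ℝ whose cumulative distribution function F is continuous, let P be a natural number, let x₀ ∈ ℝ and let x_{jk} ∈ ℝ for 0 ≤ j ≤ P, 0 ≤ k < 2^j, and define x(λ) = x₀ + Σ_{j=0}^{P} Σ_{k=0}^{2^j−1} x_{jk}·ψ_{jk}(F(λ)). Then the mean of x under μ equals the leading coefficient: ∫ x(λ) dμ(λ) = x₀. -/
open MeasureTheory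

open Filter Topology Set ProbabilityTheory

lemma aux_le (μ : Measure ℝ) [IsProbabilityMeasure μ] (F : ℝ → ℝ)
    (hF : ∀ t : ℝ, F t = (μ (Set.Iic t)).toReal) (hFc : Continuous F)
    (p : ℝ) (hp1 : p < 1) : μ {t | F t ≤ p} = ENNReal.ofReal p := by
  have hFeq : ∀ t, F t = cdf μ t := fun t => (hF t).trans (cdf_eq_real μ t).symm
  have hmono : Monotone F := fun s t h => by rw [hFeq, hFeq]; exact monotone_cdf μ h
  have h0 : ∀ t, 0 ≤ F t := fun t => (hFeq t) ▸ cdf_nonneg μ t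
  have hIic : ∀ t, μ (Set.Iic t) = ENNReal.ofReal (F t) := fun t => by
    rw [hFeq]; exact (ofReal_cdf μ t).symm
  have hFfun : F = fun t => cdf μ t := funext hFeq
  have hbot : Tendsto F atBot (𝓝 0) := by rw [hFfun]; exact tendsto_cdf_atBot μ
  have htop : Tendsto F atTop (𝓝 1) := by rw [hFfun]; exact tendsto_cdf_atTop μ
  rcases lt_or_ge p 0 with hp | hp
  · have he : {t | F t ≤ p} = ∅ := by
      ext t; simp only [Set.mem_setOf_eq, Set.mem_empty_iff_false, iff_false, not_le]
      exact lt_of_lt_of_le hp (h0 t)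
    rw [he, measure_empty, ENNReal.ofReal_of_nonpos hp.le]
  · by_cases hne : {t | F t ≤ p}.Nonempty
    · have hclosed : IsClosed {t | F t ≤ p} := isClosed_le hFc continuous_const
      have hbdd : BddAbove {t | F t ≤ p} := by
        obtain ⟨u, hu⟩ := (htop.eventually_const_lt hp1).exists
        refine ⟨u, fun t ht => ?_⟩
        by_contra h
        push_neg at h
        exact absurd (hmono h.le) (not_le.2 (lt_of_le_of_lt ht hu))
      set s := sSup {t | F t ≤ p} with hs_def
      have hs_mem : F s ≤ p := hclosed.csSup_mem hne hbdd
      have hset : {t | F t ≤ p} = Set.Iic s := by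
        ext t
        constructor
        · intro ht; exact le_csSup hbdd ht
        · intro ht; exact (hmono ht).trans hs_mem
      have hsp : p ≤ F s := by
        have h1 : Tendsto (fun n : ℕ => s + 1 / (n + 1 : ℝ)) atTop (𝓝 s) := by
          have := tendsto_one_div_add_atTop_nhds_zero_nat (𝕜 := ℝ)
          simpa using tendsto_const_nhds.add this
        have h2 : Tendsto (fun n : ℕ => F (s + 1 / (n + 1 : ℝ))) atTop (𝓝 (F s)) :=
          (hFc.tendsto s).comp h1
        refine ge_of_tendsto h2 (Filter.Eventually.of_forall fun n => ?_)
        have hnot : s + 1 / (n + 1 : ℝ) ∉ {t | F t ≤ p} := by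
          rw [hset]
          simp only [Set.mem_Iic, not_le]
          have : (0:ℝ) < 1 / (n + 1) := by positivity
          linarith
        exact (not_le.1 hnot).le
      rw [hset, hIic s, le_antisymm hs_mem hsp]
    · rw [Set.not_nonempty_iff_eq_empty] at hne
      have hall : ∀ t, p ≤ F t := by
        intro t
        by_contra h
        push_neg at h
        exact absurd (Set.mem_setOf_eq ▸ h.le : t ∈ {t | F t ≤ p}) (hne ▸ Set.notMem_empty t)
      have : p ≤ 0 := ge_of_tendsto hbot (Filter.Eventually.of_forall hall)
      rw [hne, measure_empty, le_antisymm this hp, ENNReal.ofReal_zero]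

lemma aux_lt (μ : Measure ℝ) [IsProbabilityMeasure μ] (F : ℝ → ℝ)
    (hF : ∀ t : ℝ, F t = (μ (Set.Iic t)).toReal) (hFc : Continuous F)
    (p : ℝ) (hp1 : p ≤ 1) : μ {t | F t < p} = ENNReal.ofReal p := by
  have h0 : ∀ t, 0 ≤ F t := fun t => by rw [hF t]; exact ENNReal.toReal_nonneg
  rcases le_or_gt p 0 with hp | hp
  · have he : {t | F t < p} = ∅ := by
      ext t; simp only [Set.mem_setOf_eq, Set.mem_empty_iff_false, iff_false, not_lt]
      exact hp.trans (h0 t)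
    rw [he, measure_empty, ENNReal.ofReal_of_nonpos hp]
  · have hu : {t | F t < p} = ⋃ n : ℕ, {t | F t ≤ p - 1 / (n + 1)} := by
      ext t
      simp only [Set.mem_setOf_eq, Set.mem_iUnion]
      constructor
      · intro ht
        obtain ⟨n, hn⟩ := exists_nat_one_div_lt (show 0 < p - F t by linarith)
        exact ⟨n, by push_cast at hn ⊢; linarith⟩
      · rintro ⟨n, hn⟩
        have : (0:ℝ) < 1 / (n + 1) := by positivity
        linarith
    have hmonoS : Monotone (fun n : ℕ => {t | F t ≤ p - 1 / (n + 1 : ℝ)}) := by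
      intro n m hnm t ht
      simp only [Set.mem_setOf_eq] at ht ⊢
      have : 1 / (m + 1 : ℝ) ≤ 1 / (n + 1 : ℝ) := by
        apply one_div_le_one_div_of_le
        · positivity
        · push_cast; have : (n:ℝ) ≤ m := by exact_mod_cast hnm
          linarith
      linarith
    rw [hu, hmonoS.directed_le.measure_iUnion]
    have heach : ∀ n : ℕ, μ {t | F t ≤ p - 1 / (n + 1 : ℝ)}
        = ENNReal.ofReal (p - 1 / (n + 1 : ℝ)) := fun n => by
      apply aux_le μ F hF hFc
      have : (0:ℝ) < 1 / (n + 1) := by positivity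
      linarith
    simp_rw [heach]
    have hm : Monotone fun n : ℕ => ENNReal.ofReal (p - 1 / (n + 1 : ℝ)) := by
      intro n m hnm
      apply ENNReal.ofReal_le_ofReal
      have : 1 / (m + 1 : ℝ) ≤ 1 / (n + 1 : ℝ) := by
        apply one_div_le_one_div_of_le
        · positivity
        · push_cast; have : (n:ℝ) ≤ m := by exact_mod_cast hnm
          linarith
      linarith
    have hlim : Tendsto (fun n : ℕ => ENNReal.ofReal (p - 1 / (n + 1 : ℝ))) atTop
        (𝓝 (ENNReal.ofReal p)) := by
      apply (ENNReal.continuous_ofReal.tendsto p).comp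
      have := tendsto_one_div_add_atTop_nhds_zero_nat (𝕜 := ℝ)
      simpa using tendsto_const_nhds.sub this
    exact tendsto_nhds_unique (tendsto_atTop_iSup hm) hlim

lemma aux_ico (μ : Measure ℝ) [IsProbabilityMeasure μ] (F : ℝ → ℝ)
    (hF : ∀ t : ℝ, F t = (μ (Set.Iic t)).toReal) (hFc : Continuous F)
    (a b : ℝ) (ha : 0 ≤ a) (hab : a ≤ b) (hb : b ≤ 1) :
    μ {t | a ≤ F t ∧ F t < b} = ENNReal.ofReal (b - a) := by
  have hdiff : {t | a ≤ F t ∧ F t < b} = {t | F t < b} \ {t | F t < a} := by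
    ext t
    simp only [Set.mem_setOf_eq, Set.mem_diff, not_lt]
    tauto
  have hsub : {t | F t < a} ⊆ {t | F t < b} := fun t ht => lt_of_lt_of_le ht hab
  have hmeas : MeasurableSet {t | F t < a} :=
    (isOpen_Iio.preimage hFc).measurableSet
  rw [hdiff, measure_diff hsub hmeas.nullMeasurableSet (measure_ne_top μ _),
    aux_lt μ F hF hFc b hb, aux_lt μ F hF hFc a (hab.trans hb),
    ← ENNReal.ofReal_sub b ha]

lemma haar_int (μ : Measure ℝ) [IsProbabilityMeasure μ] (F : ℝ → ℝ)
    (hF : ∀ t : ℝ, F t = (μ (Set.Iic t)).toReal) (hFc : Continuous F)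
    (j k : ℕ) (hk : k < 2 ^ j) :
    Integrable (fun t => haarW j k (F t)) μ ∧ ∫ t, haarW j k (F t) ∂μ = 0 := by
  have h2 : (0:ℝ) < 2 ^ j := by positivity
  set c : ℝ := (2 : ℝ) ^ ((j : ℝ) / 2) with hc
  set a : ℝ := (k : ℝ) / 2 ^ j with ha_def
  set m : ℝ := ((k : ℝ) + 1 / 2) / 2 ^ j with hm_def
  set b : ℝ := ((k : ℝ) + 1) / 2 ^ j with hb_def
  set S1 : Set ℝ := {t | a ≤ F t ∧ F t < m} with hS1_def
  set S2 : Set ℝ := {t | m ≤ F t ∧ F t < b} with hS2_def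
  have hfun : (fun t => haarW j k (F t))
      = fun t => c * (S1.indicator (fun _ => (1:ℝ)) t - S2.indicator (fun _ => (1:ℝ)) t) := by
    funext t
    set u := F t with hu
    have e1 : (0 ≤ 2 ^ j * u - (k:ℝ) ∧ 2 ^ j * u - (k:ℝ) < 1 / 2) ↔ (a ≤ u ∧ u < m) := by
      rw [ha_def, hm_def, div_le_iff₀ h2, lt_div_iff₀ h2]
      constructor <;> rintro ⟨h1, h2'⟩ <;> constructor <;> nlinarith
    have e2 : (1 / 2 ≤ 2 ^ j * u - (k:ℝ) ∧ 2 ^ j * u - (k:ℝ) < 1) ↔ (m ≤ u ∧ u < b) := by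
      rw [hm_def, hb_def, div_le_iff₀ h2, lt_div_iff₀ h2]
      constructor <;> rintro ⟨h1, h2'⟩ <;> constructor <;> nlinarith
    have ht1 : t ∈ S1 ↔ (a ≤ u ∧ u < m) := Iff.rfl
    have ht2 : t ∈ S2 ↔ (m ≤ u ∧ u < b) := Iff.rfl
    simp only [haarW, motherHaar, ← hu]
    by_cases hA : a ≤ u ∧ u < m
    · rw [if_pos (e1.2 hA), Set.indicator_of_mem (ht1.2 hA),
        Set.indicator_of_notMem (by rw [ht2]; rintro ⟨h1, _⟩; exact absurd hA.2 (not_lt.2 h1))]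
      ring
    · by_cases hB : m ≤ u ∧ u < b
      · rw [if_neg (fun h => hA (e1.1 h)), if_pos (e2.2 hB),
          Set.indicator_of_notMem (by rw [ht1]; exact hA),
          Set.indicator_of_mem (ht2.2 hB)]
        ring
      · rw [if_neg (fun h => hA (e1.1 h)), if_neg (fun h => hB (e2.1 h)),
          Set.indicator_of_notMem (by rw [ht1]; exact hA),
          Set.indicator_of_notMem (by rw [ht2]; exact hB)]
        ring
  have hS1m : MeasurableSet S1 := by
    have : S1 = F ⁻¹' Set.Ico a m := rfl
    rw [this]; exact hFc.measurable measurableSet_Ico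
  have hS2m : MeasurableSet S2 := by
    have : S2 = F ⁻¹' Set.Ico m b := rfl
    rw [this]; exact hFc.measurable measurableSet_Ico
  have hInt1 : Integrable (S1.indicator fun _ => (1:ℝ)) μ :=
    (integrable_const (1:ℝ)).indicator hS1m
  have hInt2 : Integrable (S2.indicator fun _ => (1:ℝ)) μ :=
    (integrable_const (1:ℝ)).indicator hS2m
  have hk' : (k:ℝ) + 1 ≤ 2 ^ j := by
    have : (k:ℝ) + 1 = ((k + 1 : ℕ) : ℝ) := by push_cast; ring
    rw [this]
    exact_mod_cast Nat.succ_le_of_lt hk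
  have ha0 : 0 ≤ a := by positivity
  constructor
  · rw [hfun]; exact ((hInt1.sub hInt2).const_mul c)
  · rw [hfun, integral_const_mul, integral_sub hInt1 hInt2,
      integral_indicator_const (1:ℝ) hS1m, integral_indicator_const (1:ℝ) hS2m, measureReal_def, measureReal_def]
    have hm1 : μ S1 = ENNReal.ofReal (m - a) := by
      apply aux_ico μ F hF hFc a m ha0
      · rw [ha_def, hm_def]; gcongr; linarith
      · rw [hm_def, div_le_one h2]; linarith
    have hm2 : μ S2 = ENNReal.ofReal (b - m) := by
      apply aux_ico μ F hF hFc m b (by positivity)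
      · rw [hm_def, hb_def]; gcongr; linarith
      · rw [hb_def, div_le_one h2]; linarith
    rw [hm1, hm2]
    have : m - a = b - m := by rw [ha_def, hm_def, hb_def]; ring
    rw [this]
    ring

/-- For the truncated Wiener–Haar expansion
`x(λ) = x₀ + ∑_{j=0}^{P} ∑_{k=0}^{2^j-1} x_{jk} ψ_{jk}(F(λ))`, the mean of `x` under
`μ` is the leading coefficient `x₀`. -/
theorem stmt_12 (μ : Measure ℝ) [IsProbabilityMeasure μ]
    (F : ℝ → ℝ) (hF : ∀ t : ℝ, F t = (μ (Set.Iic t)).toReal) (hFc : Continuous F)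
    (P : ℕ) (x₀ : ℝ) (x : ℕ → ℕ → ℝ) :
    ∫ t, (x₀ + ∑ j ∈ Finset.range (P + 1), ∑ k ∈ Finset.range (2 ^ j),
        x j k * haarW j k (F t)) ∂μ = x₀ := by
  have hterm : ∀ j k : ℕ, k < 2 ^ j → Integrable (fun t => x j k * haarW j k (F t)) μ :=
    fun j k hk => ((haar_int μ F hF hFc j k hk).1.const_mul (x j k))
  have hsum_int : Integrable (fun t => ∑ j ∈ Finset.range (P + 1),
      ∑ k ∈ Finset.range (2 ^ j), x j k * haarW j k (F t)) μ := by
    apply integrable_finset_sum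
    intro j hj
    apply integrable_finset_sum
    intro k hk
    exact hterm j k (Finset.mem_range.1 hk)
  rw [integral_add (integrable_const x₀) hsum_int, integral_const, probReal_univ,
    one_smul, integral_finset_sum _ (fun j hj =>
      integrable_finset_sum _ fun k hk => hterm j k (Finset.mem_range.1 hk))]
  have : ∀ j ∈ Finset.range (P + 1), (∫ t, ∑ k ∈ Finset.range (2 ^ j),
      x j k * haarW j k (F t) ∂μ) = 0 := by
    intro j hj
    rw [integral_finset_sum _ (fun k hk => hterm j k (Finset.mem_range.1 hk))]
    apply Finset.sum_eq_zero
    intro k hk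
    rw [integral_const_mul, (haar_int μ F hF hFc j k (Finset.mem_range.1 hk)).2, mul_zero]
  rw [Finset.sum_congr rfl this, Finset.sum_const, smul_zero, add_zero]
end
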